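/- Let R be a ring which has only finitely many simple right R-modules up to isomorphism. Then every distributive right R-module is quotient finite-dimensional, i.e., every quotient module of a distributive right R-module does not contain an infinite direct sum of nonzero submodules. -/
import Mathlib


/-- A module is *distributive* if its lattice of submodules is distributive, i.e.
`X ⊓ (Y ⊔ Z) = (X ⊓ Y) ⊔ (X ⊓ Z)` for all submodules `X, Y, Z`. -/
def IsDistribModule (R M : Type*) [Ring R] [AddCommGroup M] [Module R M] : Prop :=
  ∀ X Y Z : Submodule R M, X ⊓ (Y ⊔ Z) = X ⊓ Y ⊔ X ⊓ Z

/-- A module is *finite-dimensional* (in the sense of Goldie/uniform dimension) if it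
does not contain an infinite direct sum of nonzero submodules, i.e. every independent
family of nonzero submodules is finite. -/
def IsFinDimModule (R M : Type*) [Ring R] [AddCommGroup M] [Module R M] : Prop :=
  ∀ (ι : Type) (N : ι → Submodule R M), iSupIndep N → (∀ i, N i ≠ ⊥) → Finite ι

/-- A ring `R` has only finitely many simple right `R`-modules up to isomorphism:
since every simple right module is isomorphic to a quotient of `R` (as a right module,
i.e. as an `Rᵐᵒᵖ`-module), this says that there is a finite set of right ideals such that
every simple quotient of `R` is isomorphic to a quotient by one of them. -/
def HasFinitelyManySimpleRightModules (R : Type*) [Ring R] : Prop :=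
  ∃ s : Finset (Submodule Rᵐᵒᵖ R),
    ∀ I : Submodule Rᵐᵒᵖ R, IsSimpleModule Rᵐᵒᵖ (R ⧸ I) →
      ∃ J ∈ s, Nonempty ((R ⧸ I) ≃ₗ[Rᵐᵒᵖ] (R ⧸ J))


/-- A module is *quotient finite-dimensional* if every quotient module of it is
finite-dimensional. -/
def IsQFDModule (R M : Type*) [Ring R] [AddCommGroup M] [Module R M] : Prop :=
  ∀ N : Submodule R M, IsFinDimModule R (M ⧸ N)

open MulOpposite

section aux

variable (R : Type*) [Ring R] (M : Type*) [AddCommGroup M] [Module Rᵐᵒᵖ M]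

/-- right multiplication landing on `x` -/
def smulBy (x : M) : R →ₗ[Rᵐᵒᵖ] M where
  toFun r := op r • x
  map_add' a b := by simp [add_smul]
  map_smul' a r := by
    simp only [RingHom.id_apply]
    rw [MulOpposite.smul_eq_mul_unop, ← mul_smul]
    congr 1

@[simp] lemma smulBy_apply (x : M) (r : R) : smulBy R M x r = op r • x := rfl

/-- quotients of distributive modules are distributive -/
lemma IsDistribModule.quotient {R M : Type*} [Ring R] [AddCommGroup M] [Module R M]
    (hM : IsDistribModule R M) (N : Submodule R M) : IsDistribModule R (M ⧸ N) := by
  intro X Y Z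
  have hsur := Submodule.mkQ_surjective N
  have csup : ∀ A B : Submodule R (M ⧸ N),
      (A ⊔ B).comap N.mkQ = A.comap N.mkQ ⊔ B.comap N.mkQ := by
    intro A B
    apply le_antisymm
    · intro w hw
      rw [Submodule.mem_comap] at hw
      obtain ⟨a, ha, b, hb, hab⟩ := Submodule.mem_sup.mp hw
      obtain ⟨a', rfl⟩ := hsur a
      obtain ⟨b', rfl⟩ := hsur b
      have : N.mkQ (w - (a' + b')) = 0 := by
        simp only [map_sub, map_add, hab, sub_self]
      rw [Submodule.mkQ_apply, Submodule.Quotient.mk_eq_zero] at this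
      have hw' : w = (a' + (w - (a' + b'))) + b' := by abel
      rw [hw']
      refine Submodule.add_mem_sup (Submodule.add_mem _ ?_ ?_) ?_
      · exact Submodule.mem_comap.mpr ha
      · exact Submodule.mem_comap.mpr (by simp [(Submodule.Quotient.mk_eq_zero N).mpr this])
      · exact Submodule.mem_comap.mpr hb
    · exact sup_le (Submodule.comap_mono le_sup_left) (Submodule.comap_mono le_sup_right)
  apply Submodule.comap_injective_of_surjective hsur
  rw [Submodule.comap_inf, csup, csup, Submodule.comap_inf, Submodule.comap_inf,
    hM (X.comap N.mkQ) (Y.comap N.mkQ) (Z.comap N.mkQ)]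

end aux


lemma distrib_findim (R : Type*) [Ring R] (hfin : HasFinitelyManySimpleRightModules R)
    (M : Type*) [AddCommGroup M] [Module Rᵐᵒᵖ M] (hM : IsDistribModule Rᵐᵒᵖ M) :
    IsFinDimModule Rᵐᵒᵖ M := by
  intro ι N hind hbot
  by_contra hinf
  have hι : Infinite ι := not_finite_iff_infinite.mp hinf
  choose x hxN hx0 using fun i => (Submodule.ne_bot_iff (N i)).mp (hbot i)
  -- annihilators
  set ann : ι → Submodule Rᵐᵒᵖ R := fun i => LinearMap.ker (smulBy R M (x i)) with hann
  have hann_ne_top : ∀ i, ann i ≠ ⊤ := by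
    intro i h
    have : (1 : R) ∈ ann i := h ▸ Submodule.mem_top
    rw [hann, LinearMap.mem_ker, smulBy_apply, op_one, one_smul] at this
    exact hx0 i this
  -- R is coatomic as a right module over itself
  have htop : (⊤ : Submodule Rᵐᵒᵖ R) = Submodule.span Rᵐᵒᵖ {(1 : R)} := by
    refine le_antisymm (fun r _ => Submodule.mem_span_singleton.mpr ⟨op r, by simp⟩) le_top
  have coat : IsCoatomic (Submodule Rᵐᵒᵖ R) :=
    CompleteLattice.coatomic_of_top_compact
      (htop ▸ Submodule.singleton_span_isCompactElement (1 : R))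
  choose m hm hle using fun i =>
    ((coat.eq_top_or_exists_le_coatom (ann i)).resolve_left (hann_ne_top i))
  -- finitely many simple modules: pigeonhole
  obtain ⟨s, hs⟩ := hfin
  choose J hJs hiso using fun i => hs (m i) (isSimpleModule_iff_isCoatom.mpr (hm i))
  obtain ⟨i, j, hij, hJ⟩ : ∃ i j, i ≠ j ∧ J i = J j := by
    obtain ⟨i, j, hij, h⟩ :=
      Finite.exists_ne_map_eq_of_infinite (fun i => (⟨J i, hJs i⟩ : {a // a ∈ s}))
    exact ⟨i, j, hij, congrArg Subtype.val h⟩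
  -- an isomorphism between the two simple quotients
  let ψ : (R ⧸ m i) ≃ₗ[Rᵐᵒᵖ] (R ⧸ m j) :=
    (hiso i).some.trans ((Submodule.quotEquivOfEq _ _ hJ).trans (hiso j).some.symm)
  obtain ⟨u, hu⟩ := Submodule.mkQ_surjective (m j) (ψ ((m i).mkQ 1))
  have hψ : ∀ r : R, ψ ((m i).mkQ r) = (m j).mkQ (u * r) := by
    intro r
    have h1 : (m i).mkQ r = op r • (m i).mkQ 1 := by
      rw [← map_smul]; congr 1; simp [op_smul_eq_mul]
    rw [h1, map_smul, ← hu, ← map_smul]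
    simp [op_smul_eq_mul]
  have key : ∀ r : R, u * r ∈ m j ↔ r ∈ m i := by
    intro r
    rw [← Submodule.Quotient.mk_eq_zero (m j), ← Submodule.Quotient.mk_eq_zero (m i),
      ← Submodule.mkQ_apply, ← Submodule.mkQ_apply, ← hψ]
    exact ⟨fun h => by rwa [LinearEquiv.map_eq_zero_iff] at h, fun h => by rw [h, map_zero]⟩
  -- the three submodules violating distributivity
  set y : M := op u • x j with hy
  set z : M := x i + y with hz
  set K₁ : Submodule Rᵐᵒᵖ M := (m i).map (smulBy R M (x i)) with hK₁
  set K₂ : Submodule Rᵐᵒᵖ M := (m j).map (smulBy R M (x j)) with hK₂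
  set C : Submodule Rᵐᵒᵖ M := K₁ ⊔ K₂ with hC
  have hK₁N : K₁ ≤ N i := by
    rintro w hw
    obtain ⟨t, -, rfl⟩ := Submodule.mem_map.mp hw
    exact Submodule.smul_mem _ _ (hxN i)
  have hK₂N : K₂ ≤ N j := by
    rintro w hw
    obtain ⟨t, -, rfl⟩ := Submodule.mem_map.mp hw
    exact Submodule.smul_mem _ _ (hxN j)
  have hyN : y ∈ N j := Submodule.smul_mem _ _ (hxN j)
  -- component splitting in N i ⊔ N j
  have hdisj : ∀ a b : M, a ∈ N i → b ∈ N j → a + b = 0 → a = 0 ∧ b = 0 := by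
    intro a b ha hb hab
    have hd := hind.pairwiseDisjoint hij
    have ha' : a = -b := eq_neg_of_add_eq_zero_left hab
    have ha0 : a = 0 := Submodule.disjoint_def.mp hd a ha (ha' ▸ Submodule.neg_mem _ hb)
    exact ⟨ha0, by rw [ha0, zero_add] at hab; exact hab⟩
  -- rewriting op r • y
  have hyrw : ∀ r : R, op r • y = op (u * r) • x j := by
    intro r
    rw [hy, ← mul_smul, ← op_mul]
  -- membership helpers
  have hxK₁ : ∀ r : R, r ∈ m i → op r • x i ∈ K₁ := fun r hr => Submodule.mem_map_of_mem hr
  have hyK₂ : ∀ r : R, r ∈ m i → op r • y ∈ K₂ := by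
    intro r hr
    rw [hyrw]
    exact Submodule.mem_map_of_mem ((key r).mpr hr)
  have hK₁mem : ∀ r : R, op r • x i ∈ K₁ → r ∈ m i := by
    intro r hr
    obtain ⟨t, ht, hteq⟩ := Submodule.mem_map.mp hr
    rw [smulBy_apply] at hteq
    have hann' : r - t ∈ ann i := by
      rw [hann]
      simp only [LinearMap.mem_ker, smulBy_apply]
      rw [op_sub, sub_smul, hteq, sub_self]
    have : r - t ∈ m i := hle i hann'
    simpa using (m i).add_mem this ht
  have hK₂mem : ∀ r : R, op r • y ∈ K₂ → r ∈ m i := by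
    intro r hr
    rw [hyrw] at hr
    obtain ⟨t, ht, hteq⟩ := Submodule.mem_map.mp hr
    rw [smulBy_apply] at hteq
    have hann' : u * r - t ∈ LinearMap.ker (smulBy R M (x j)) := by
      simp only [LinearMap.mem_ker, smulBy_apply]
      rw [op_sub, sub_smul, hteq, sub_self]
    have hann'' : (u * r - t : R) ∈ m j := hle j hann'
    have hur : u * r ∈ m j := by simpa using (m j).add_mem hann'' ht
    exact (key r).mp hur
  -- the three submodules
  have hzC : z ∈ C := by
    set X : Submodule Rᵐᵒᵖ M := LinearMap.range (smulBy R M z) ⊔ C with hX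
    set Y : Submodule Rᵐᵒᵖ M := LinearMap.range (smulBy R M (x i)) ⊔ C with hY
    set Z : Submodule Rᵐᵒᵖ M := LinearMap.range (smulBy R M y) ⊔ C with hZ
    have hzX : z ∈ X := Submodule.mem_sup_left (LinearMap.mem_range.mpr ⟨1, by simp⟩)
    have hzYZ : z ∈ Y ⊔ Z := by
      rw [hz]
      refine Submodule.add_mem _ ?_ ?_
      · exact Submodule.mem_sup_left
          (Submodule.mem_sup_left (LinearMap.mem_range.mpr ⟨1, by simp⟩))
      · exact Submodule.mem_sup_right
          (Submodule.mem_sup_left (LinearMap.mem_range.mpr ⟨1, by simp⟩))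
    have claim1 : X ⊓ Y ≤ C := by
      rintro w ⟨hwX, hwY⟩
      obtain ⟨a, ha, c₁, hc₁, hac⟩ := Submodule.mem_sup.mp hwX
      obtain ⟨r, rfl⟩ := LinearMap.mem_range.mp ha
      obtain ⟨b, hb, c₂, hc₂, hbc⟩ := Submodule.mem_sup.mp hwY
      obtain ⟨sR, rfl⟩ := LinearMap.mem_range.mp hb
      obtain ⟨k₁, hk₁, k₂, hk₂, rfl⟩ := Submodule.mem_sup.mp hc₁
      obtain ⟨l₁, hl₁, l₂, hl₂, rfl⟩ := Submodule.mem_sup.mp hc₂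
      have hEq : op r • x i + op r • y + (k₁ + k₂) = op sR • x i + (l₁ + l₂) := by
        have h2 : smulBy R M z r + (k₁ + k₂) = smulBy R M (x i) sR + (l₁ + l₂) :=
          hac.trans hbc.symm
        simp only [smulBy_apply, hz, smul_add] at h2
        exact h2
      have hPQ : (op r • x i + k₁ - (op sR • x i + l₁)) + (op r • y + k₂ - l₂) = 0 := by
        have h0 := sub_eq_zero.mpr hEq
        rw [← h0]; abel
      have hsplit := hdisj _ _
        (Submodule.sub_mem _ (Submodule.add_mem _ (Submodule.smul_mem _ _ (hxN i)) (hK₁N hk₁))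
          (Submodule.add_mem _ (Submodule.smul_mem _ _ (hxN i)) (hK₁N hl₁)))
        (Submodule.sub_mem _ (Submodule.add_mem _ (Submodule.smul_mem _ _ hyN) (hK₂N hk₂))
          (hK₂N hl₂)) hPQ
      have hQ0 := hsplit.2
      have hyK : op r • y ∈ K₂ := by
        have : op r • y = l₂ - k₂ := by
          rw [← sub_eq_zero, ← hQ0]; abel
        rw [this]; exact Submodule.sub_mem _ hl₂ hk₂
      have hri : r ∈ m i := hK₂mem r hyK
      rw [← hac]
      exact Submodule.add_mem _
        (by rw [smulBy_apply, hz, smul_add]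
            exact Submodule.add_mem _ (Submodule.mem_sup_left (hxK₁ r hri)) (Submodule.mem_sup_right (hyK₂ r hri)))
        (Submodule.add_mem _ (Submodule.mem_sup_left hk₁) (Submodule.mem_sup_right hk₂))
    have claim2 : X ⊓ Z ≤ C := by
      rintro w ⟨hwX, hwZ⟩
      obtain ⟨a, ha, c₁, hc₁, hac⟩ := Submodule.mem_sup.mp hwX
      obtain ⟨r, rfl⟩ := LinearMap.mem_range.mp ha
      obtain ⟨b, hb, c₂, hc₂, hbc⟩ := Submodule.mem_sup.mp hwZ
      obtain ⟨sR, rfl⟩ := LinearMap.mem_range.mp hb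
      obtain ⟨k₁, hk₁, k₂, hk₂, rfl⟩ := Submodule.mem_sup.mp hc₁
      obtain ⟨l₁, hl₁, l₂, hl₂, rfl⟩ := Submodule.mem_sup.mp hc₂
      have hEq : op r • x i + op r • y + (k₁ + k₂) = op sR • y + (l₁ + l₂) := by
        have h2 : smulBy R M z r + (k₁ + k₂) = smulBy R M y sR + (l₁ + l₂) :=
          hac.trans hbc.symm
        simp only [smulBy_apply, hz, smul_add] at h2
        exact h2
      have hPQ : (op r • x i + k₁ - l₁) + (op r • y + k₂ - (op sR • y + l₂)) = 0 := by
        have h0 := sub_eq_zero.mpr hEq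
        rw [← h0]; abel
      have hsplit := hdisj _ _
        (Submodule.sub_mem _ (Submodule.add_mem _ (Submodule.smul_mem _ _ (hxN i)) (hK₁N hk₁))
          (hK₁N hl₁))
        (Submodule.sub_mem _ (Submodule.add_mem _ (Submodule.smul_mem _ _ hyN) (hK₂N hk₂))
          (Submodule.add_mem _ (Submodule.smul_mem _ _ hyN) (hK₂N hl₂))) hPQ
      have hP0 := hsplit.1
      have hxK : op r • x i ∈ K₁ := by
        have : op r • x i = l₁ - k₁ := by
          rw [← sub_eq_zero, ← hP0]; abel
        rw [this]; exact Submodule.sub_mem _ hl₁ hk₁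
      have hri : r ∈ m i := hK₁mem r hxK
      rw [← hac]
      exact Submodule.add_mem _
        (by rw [smulBy_apply, hz, smul_add]
            exact Submodule.add_mem _ (Submodule.mem_sup_left (hxK₁ r hri)) (Submodule.mem_sup_right (hyK₂ r hri)))
        (Submodule.add_mem _ (Submodule.mem_sup_left hk₁) (Submodule.mem_sup_right hk₂))
    have hzmem : z ∈ X ⊓ Y ⊔ X ⊓ Z := hM X Y Z ▸ Submodule.mem_inf.mpr ⟨hzX, hzYZ⟩
    exact (sup_le claim1 claim2) hzmem
  -- final contradiction
  obtain ⟨k₁, hk₁, k₂, hk₂, hksum⟩ := Submodule.mem_sup.mp hzC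
  have hfinal := hdisj (x i - k₁) (y - k₂)
    (Submodule.sub_mem _ (hxN i) (hK₁N hk₁)) (Submodule.sub_mem _ hyN (hK₂N hk₂))
    (by rw [← sub_eq_zero.mpr hksum.symm, hz]; abel)
  have hxk : x i ∈ K₁ := by
    have h1 := hfinal.1
    rw [sub_eq_zero] at h1
    rw [h1]; exact hk₁
  have h1m : (1 : R) ∈ m i := hK₁mem 1 (by simpa using hxk)
  exact (hm i).1 (Submodule.eq_top_iff'.mpr fun r => by
    simpa [op_smul_eq_mul] using (m i).smul_mem (op r) h1m)



/-- If `R` has only finitely many simple right `R`-modules up to isomorphism, then every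
distributive right `R`-module is quotient finite-dimensional. -/
theorem stmt4 (R : Type*) [Ring R] (hfin : HasFinitelyManySimpleRightModules R)
    (M : Type*) [AddCommGroup M] [Module Rᵐᵒᵖ M] (hM : IsDistribModule Rᵐᵒᵖ M) :
    IsQFDModule Rᵐᵒᵖ M := by
  intro N
  exact distrib_findim R hfin _ (hM.quotient N)
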